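/- For every positive integer n there exists a positive integer k such that ν(k) = n; that is, every positive integer is attained as a value of ν. -/

import Mathlib

def F (x y z : ℕ) : ℤ :=
  (x : ℤ) ^ 3 + (y : ℤ) ^ 3 + (z : ℤ) ^ 3 - 3 * (x : ℤ) * (y : ℤ) * (z : ℤ)

noncomputable def nu (n : ℕ) : ℕ :=
  Set.ncard {t : ℕ × ℕ × ℕ |
    t.1 ≤ t.2.1 ∧ t.2.1 ≤ t.2.2 ∧ t.1 + 1 ≤ t.2.2 ∧ F t.1 t.2.1 t.2.2 = n}

lemma Fid (x a b : ℕ) :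
    F x (x+a) (x+a+b) = ((3*x+2*a+b) * (a^2+a*b+b^2) : ℕ) := by
  unfold F; push_cast; ring

lemma pow2mod3 (t : ℕ) : 2^t % 3 = 1 + t % 2 := by
  induction t with
  | zero => simp
  | succ t ih =>
    rw [pow_succ, Nat.mul_mod, ih]
    rcases Nat.mod_two_eq_zero_or_one t with h | h <;> simp [h, Nat.add_mod]

lemma norm_pow2 : ∀ j a b : ℕ, a^2 + a*b + b^2 = 2^j →
    ∃ i, j = 2*i ∧ ((a = 2^i ∧ b = 0) ∨ (a = 0 ∧ b = 2^i)) := by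
  intro j
  induction j using Nat.strong_induction_on with
  | _ j ih =>
    intro a b h
    match j with
    | 0 =>
      have ha : a ≤ 1 := by nlinarith
      have hb : b ≤ 1 := by nlinarith
      refine ⟨0, rfl, ?_⟩
      interval_cases a <;> interval_cases b <;> simp_all
    | (j+1) =>
      have hev : Even (a^2 + a*b + b^2) := by
        rw [h]; exact ⟨2^j, by ring⟩
      have hae : Even a ∧ Even b := by
        simp [parity_simps] at hev
        rcases Nat.even_or_odd a with h1 | h1 <;> rcases Nat.even_or_odd b with h2 | h2 <;>
          simp_all [Nat.even_iff, Nat.odd_iff]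
      obtain ⟨a', rfl⟩ := hae.1
      obtain ⟨b', rfl⟩ := hae.2
      have h4 : 4 * (a'^2 + a'*b' + b'^2) = 2^(j+1) := by ring_nf; ring_nf at h; omega
      match j with
      | 0 => omega
      | (j'+1) =>
        have h' : a'^2 + a'*b' + b'^2 = 2^j' := by
          have : (2:ℕ)^(j'+1+1) = 4 * 2^j' := by ring
          omega
        obtain ⟨i, rfl, hc⟩ := ih j' (by omega) a' b' h'
        refine ⟨i+1, by ring, ?_⟩
        rcases hc with ⟨rfl, rfl⟩ | ⟨rfl, rfl⟩
        · exact Or.inl ⟨by ring, rfl⟩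
        · exact Or.inr ⟨rfl, by ring⟩

def gg (m i : ℕ) : ℕ × ℕ × ℕ :=
  if (m + i) % 2 = 0 then
    ((2^(m-2*i) - 2^i)/3, (2^(m-2*i) - 2^i)/3, (2^(m-2*i) - 2^i)/3 + 2^i)
  else
    ((2^(m-2*i) - 2^(i+1))/3, (2^(m-2*i) - 2^(i+1))/3 + 2^i, (2^(m-2*i) - 2^(i+1))/3 + 2^i)

lemma key (t s : ℕ) (hts : s ≤ t) (hp : t % 2 = s % 2) :
    3 * ((2^t - 2^s)/3) + 2^s = 2^t := by
  have h1 := pow2mod3 t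
  have h2 := pow2mod3 s
  have hle : (2:ℕ)^s ≤ 2^t := Nat.pow_le_pow_right (by norm_num) hts
  omega

lemma gg_inj (m : ℕ) : Function.Injective (gg m) := by
  intro i i' h
  have h1 : (gg m i).2.2 - (gg m i).1 = 2^i := by unfold gg; split <;> simp
  have h2 : (gg m i').2.2 - (gg m i').1 = 2^i' := by unfold gg; split <;> simp
  rw [h] at h1
  exact Nat.pow_right_injective (le_refl 2) (h1.symm.trans h2)

theorem stmt_17 (n : ℕ) (hn : 0 < n) : ∃ k : ℕ, 0 < k ∧ nu k = n := by
  set m := 3 * (n - 1) with hmdef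
  refine ⟨2^m, Nat.pow_pos two_pos, ?_⟩
  have hset : {t : ℕ × ℕ × ℕ |
      t.1 ≤ t.2.1 ∧ t.2.1 ≤ t.2.2 ∧ t.1 + 1 ≤ t.2.2 ∧ F t.1 t.2.1 t.2.2 = ((2^m : ℕ) : ℤ)}
      = ↑((Finset.range n).image (gg m)) := by
    ext t
    obtain ⟨x, y, z⟩ := t
    simp only [Set.mem_setOf_eq, Finset.coe_image, Set.mem_image, Finset.mem_coe,
      Finset.mem_range]
    constructor
    · rintro ⟨hxy, hyz, hxz, hF⟩
      obtain ⟨a, rfl⟩ := Nat.exists_eq_add_of_le hxy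
      obtain ⟨b, rfl⟩ := Nat.exists_eq_add_of_le hyz
      rw [Fid] at hF
      have hN : (3*x+2*a+b) * (a^2+a*b+b^2) = 2^m := by exact_mod_cast hF
      have hqd : (a^2+a*b+b^2) ∣ 2^m := Dvd.intro_left _ hN
      obtain ⟨j, hjm, hq⟩ := (Nat.dvd_prime_pow Nat.prime_two).mp hqd
      obtain ⟨i, rfl, hc⟩ := norm_pow2 j a b hq
      have hs : 3*x+2*a+b = 2^(m-2*i) := by
        have hpow : (2:ℕ)^m = 2^(m-2*i) * 2^(2*i) := by
          rw [← pow_add]; congr 1; omega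
        rw [hq, hpow] at hN
        exact Nat.eq_of_mul_eq_mul_right (Nat.pow_pos two_pos) hN
      have p1 := pow2mod3 (m-2*i)
      have p2 := pow2mod3 i
      have p3 := pow2mod3 (i+1)
      have h2i : (2:ℕ)^(i+1) = 2*2^i := by ring
      rcases hc with ⟨rfl, rfl⟩ | ⟨rfl, rfl⟩
      · -- a = 2^i, b = 0
        have hle : (2:ℕ)^(i+1) ≤ 2^(m-2*i) := by omega
        have hexp : i+1 ≤ m-2*i := (Nat.pow_le_pow_iff_right (by norm_num)).mp hle
        have hin : i < n := by omega
        refine ⟨i, hin, ?_⟩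
        have hmod : 2^(m-2*i) % 3 = 2^(i+1) % 3 := by omega
        have hp : (m-2*i)%2 = (i+1)%2 := by omega
        have hparm : (m + i) % 2 = 1 := by omega
        simp only [gg, if_neg (by omega : ¬ (m + i) % 2 = 0)]
        have hxeq : (2^(m-2*i) - 2^(i+1))/3 = x := by omega
        rw [hxeq]
        simp
      · -- a = 0, b = 2^i
        have hle : (2:ℕ)^i ≤ 2^(m-2*i) := by omega
        have hexp : i ≤ m-2*i := (Nat.pow_le_pow_iff_right (by norm_num)).mp hle
        have hin : i < n := by omega
        refine ⟨i, hin, ?_⟩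
        have hmod : 2^(m-2*i) % 3 = 2^i % 3 := by omega
        have hp : (m-2*i)%2 = i%2 := by omega
        have hparm : (m + i) % 2 = 0 := by omega
        simp only [gg, if_pos hparm]
        have hxeq : (2^(m-2*i) - 2^i)/3 = x := by omega
        rw [hxeq]
        simp
    · rintro ⟨i, hi, hgi⟩
      rw [Prod.ext_iff] at hgi
      obtain ⟨e1, hgi⟩ := hgi
      rw [Prod.ext_iff] at hgi
      obtain ⟨e2, e3⟩ := hgi
      subst e1; subst e2; subst e3
      have h3i : 3*i ≤ m := by omega
      by_cases hpar : (m + i) % 2 = 0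
      · have hkey := key (m-2*i) i (by omega) (by omega)
        simp only [gg, if_pos hpar]
        set X := (2^(m-2*i) - 2^i)/3 with hX
        refine ⟨le_refl _, Nat.le_add_right _ _, by have := Nat.one_le_two_pow (n := i); omega, ?_⟩
        have hFv : F X X (X + 2^i) = ((3*X+2*0+2^i) * (0^2+0*(2^i)+(2^i)^2) : ℕ) := by
          have h := Fid X 0 (2^i)
          simpa using h
        rw [hFv]
        norm_cast
        have h2 : (2:ℕ)^(m-2*i) * (2^i)^2 = 2^m := by
          rw [← pow_mul, ← pow_add]; congr 1; omega
        calc (3*X+2*0+2^i) * (0^2+0*(2^i)+(2^i)^2) = (3*X+2^i) * (2^i)^2 := by ring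
          _ = 2^(m-2*i) * (2^i)^2 := by rw [hkey]
          _ = 2^m := h2
      · have hine : i ≤ n - 2 := by omega
        have hkey := key (m-2*i) (i+1) (by omega) (by omega)
        simp only [gg, if_neg hpar]
        set X := (2^(m-2*i) - 2^(i+1))/3 with hX
        refine ⟨Nat.le_add_right _ _, le_refl _, by have := Nat.one_le_two_pow (n := i); omega, ?_⟩
        have hFv : F X (X + 2^i) (X + 2^i) = ((3*X+2*(2^i)+0) * ((2^i)^2+(2^i)*0+0^2) : ℕ) := by
          have h := Fid X (2^i) 0
          simpa using h
        rw [hFv]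
        norm_cast
        have h2 : (2:ℕ)^(m-2*i) * (2^i)^2 = 2^m := by
          rw [← pow_mul, ← pow_add]; congr 1; omega
        have h2i : (2:ℕ)^(i+1) = 2*2^i := by ring
        calc (3*X+2*(2^i)+0) * ((2^i)^2+(2^i)*0+0^2) = (3*X+2^(i+1)) * (2^i)^2 := by rw [h2i]; ring
          _ = 2^(m-2*i) * (2^i)^2 := by rw [hkey]
          _ = 2^m := h2
  rw [nu, hset, Set.ncard_coe_finset, Finset.card_image_of_injective _ (gg_inj m),
    Finset.card_range]
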